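/- For the Saint Venant–Kirchhoff stress P(F) = F(G FᵀF + (L/2)|F|² Id − (G + Ld/2) Id) with G > 0 and G + dL/2 > 0, and H(y,F) = (1/4)|y|⁴ + ((G+L/2)/2)|FᵀF|², the function g(A,a,B) = sup_{F ∈ ℝ^{d×d}, y ∈ ℝ^d} [a·y + A:F + B:P(F) − H(y,F)] satisfies g(A,a,B) ≥ c(|a|^{4/3} + |A|^{4/3} + |B|⁴) − 1/c for some constant c > 0 depending only on G, L, d, for all (A,a,B). -/

import Mathlib

open Matrix

noncomputable def frob {d : ℕ} (F : Matrix (Fin d) (Fin d) ℝ) : ℝ :=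
  Real.sqrt (∑ i, ∑ j, (F i j) ^ 2)

noncomputable def mdot {d : ℕ} (A B : Matrix (Fin d) (Fin d) ℝ) : ℝ :=
  ∑ i, ∑ j, A i j * B i j

/-- The Saint Venant–Kirchhoff first Piola–Kirchhoff stress. -/
noncomputable def svkP (G L : ℝ) {d : ℕ} (F : Matrix (Fin d) (Fin d) ℝ) :
    Matrix (Fin d) (Fin d) ℝ :=
  F * (G • (Fᵀ * F) + ((L / 2) * frob F ^ 2) • (1 : Matrix (Fin d) (Fin d) ℝ)
    - (G + L * d / 2) • (1 : Matrix (Fin d) (Fin d) ℝ))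

/-- The auxiliary potential H(y,F). -/
noncomputable def svkH (G L : ℝ) {d : ℕ} (y : EuclideanSpace ℝ (Fin d))
    (F : Matrix (Fin d) (Fin d) ℝ) : ℝ :=
  (1/4) * ‖y‖ ^ 4 + ((G + L / 2) / 2) * frob (Fᵀ * F) ^ 2

/-- The set over which the dual integrand g(A,a,B) is a supremum. -/
noncomputable def svkSet (G L : ℝ) {d : ℕ} (A : Matrix (Fin d) (Fin d) ℝ)
    (a : EuclideanSpace ℝ (Fin d)) (B : Matrix (Fin d) (Fin d) ℝ) : Set ℝ :=
  { z | ∃ (F : Matrix (Fin d) (Fin d) ℝ) (y : EuclideanSpace ℝ (Fin d)),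
      z = (∑ i, a i * y i) + mdot A F + mdot B (svkP G L F) - svkH G L y F }

open Finset

section Helpers
variable {d : ℕ}

lemma frob_nonneg (F : Matrix (Fin d) (Fin d) ℝ) : 0 ≤ frob F := Real.sqrt_nonneg _

lemma sum_sq_nonneg (F : Matrix (Fin d) (Fin d) ℝ) : 0 ≤ ∑ i, ∑ j, (F i j)^2 := by
  positivity

lemma frob_sq (F : Matrix (Fin d) (Fin d) ℝ) : frob F ^ 2 = ∑ i, ∑ j, (F i j)^2 :=
  Real.sq_sqrt (sum_sq_nonneg F)

lemma mdot_self (F : Matrix (Fin d) (Fin d) ℝ) : mdot F F = frob F ^ 2 := by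
  rw [frob_sq]; simp [mdot, sq]

lemma mdot_le (A F : Matrix (Fin d) (Fin d) ℝ) : mdot A F ≤ frob A * frob F := by
  have h : (mdot A F)^2 ≤ (frob A * frob F)^2 := by
    rw [mul_pow, frob_sq, frob_sq]
    have := Finset.sum_mul_sq_le_sq_mul_sq (Finset.univ : Finset (Fin d × Fin d))
      (fun p => A p.1 p.2) (fun p => F p.1 p.2)
    simpa [mdot, Fintype.sum_prod_type] using this
  have h2 : 0 ≤ frob A * frob F := mul_nonneg (frob_nonneg A) (frob_nonneg F)
  nlinarith [h, h2]

lemma frob_transpose (F : Matrix (Fin d) (Fin d) ℝ) : frob Fᵀ = frob F := by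
  unfold frob
  rw [Finset.sum_comm]
  simp [Matrix.transpose_apply]

lemma frob_smul (c : ℝ) (F : Matrix (Fin d) (Fin d) ℝ) : frob (c • F) = |c| * frob F := by
  unfold frob
  simp only [Matrix.smul_apply, smul_eq_mul, mul_pow]
  simp_rw [← Finset.mul_sum]
  rw [Real.sqrt_mul (sq_nonneg c), Real.sqrt_sq_eq_abs]

lemma frob_neg (F : Matrix (Fin d) (Fin d) ℝ) : frob (-F) = frob F := by
  have := frob_smul (-1 : ℝ) F
  simpa using this

lemma frob_one : frob (1 : Matrix (Fin d) (Fin d) ℝ) = Real.sqrt d := by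
  unfold frob
  congr 1
  simp [Matrix.one_apply, apply_ite]

lemma frob_mul_le (M N : Matrix (Fin d) (Fin d) ℝ) : frob (M * N) ≤ frob M * frob N := by
  have h : frob (M * N) ^2 ≤ (frob M * frob N)^2 := by
    rw [mul_pow, frob_sq, frob_sq, frob_sq]
    have key : ∀ i j, ((M * N) i j)^2 ≤ (∑ k, (M i k)^2) * (∑ k, (N k j)^2) := by
      intro i j
      have := Finset.sum_mul_sq_le_sq_mul_sq (Finset.univ : Finset (Fin d))
        (fun k => M i k) (fun k => N k j)
      simpa [Matrix.mul_apply] using this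
    calc ∑ i, ∑ j, ((M*N) i j)^2 ≤ ∑ i, ∑ j, (∑ k, (M i k)^2) * (∑ k, (N k j)^2) := by
          apply Finset.sum_le_sum; intro i _; apply Finset.sum_le_sum; intro j _; exact key i j
      _ = (∑ i, ∑ k, (M i k)^2) * (∑ j, ∑ k, (N k j)^2) := by
          rw [Finset.sum_mul_sum]
      _ = (∑ i, ∑ k, (M i k)^2) * (∑ k, ∑ j, (N k j)^2) := by
          rw [Finset.sum_comm (f := fun k j => (N k j)^2)]
  nlinarith [frob_nonneg (M*N), mul_nonneg (frob_nonneg M) (frob_nonneg N)]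

lemma mdot_add_right (B M N : Matrix (Fin d) (Fin d) ℝ) :
    mdot B (M + N) = mdot B M + mdot B N := by
  unfold mdot; simp [Matrix.add_apply, mul_add, Finset.sum_add_distrib]

lemma mdot_sub_right (B M N : Matrix (Fin d) (Fin d) ℝ) :
    mdot B (M - N) = mdot B M - mdot B N := by
  unfold mdot; simp [Matrix.sub_apply, mul_sub, Finset.sum_sub_distrib]

lemma mdot_smul_right (c : ℝ) (B M : Matrix (Fin d) (Fin d) ℝ) :
    mdot B (c • M) = c * mdot B M := by
  unfold mdot; simp_rw [Matrix.smul_apply, smul_eq_mul, Finset.mul_sum]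
  congr 1; ext i; congr 1; ext j; ring

lemma mdot_neg_le (B M : Matrix (Fin d) (Fin d) ℝ) : -(frob B * frob M) ≤ mdot B M := by
  have h := mdot_le B (-M)
  have h2 : mdot B (-M) = - mdot B M := by
    have := mdot_smul_right (-1 : ℝ) B M; simpa using this
  rw [h2, frob_neg] at h; linarith

lemma frob_add_le (M N : Matrix (Fin d) (Fin d) ℝ) : frob (M + N) ≤ frob M + frob N := by
  have h : frob (M+N)^2 ≤ (frob M + frob N)^2 := by
    have e : frob (M+N)^2 = frob M ^2 + 2 * mdot M N + frob N^2 := by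
      rw [frob_sq, frob_sq, frob_sq]
      unfold mdot
      have h1 : ∀ i j, ((M+N) i j)^2 = M i j^2 + 2*(M i j * N i j) + N i j^2 := by
        intro i j; simp [Matrix.add_apply]; ring
      simp_rw [h1, Finset.sum_add_distrib, Finset.mul_sum]
    have := mdot_le M N
    nlinarith
  nlinarith [frob_nonneg (M+N), frob_nonneg M, frob_nonneg N]

/-- trace bound: frob F ^4 ≤ d * frob (Fᵀ*F)^2 -/
lemma frob_quad_le (F : Matrix (Fin d) (Fin d) ℝ) :
    frob F ^ 4 ≤ (d : ℝ) * frob (Fᵀ * F) ^ 2 := by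
  have htr : frob F ^ 2 = ∑ j, (Fᵀ * F) j j := by
    rw [frob_sq]
    rw [Finset.sum_comm]
    apply Finset.sum_congr rfl; intro j _
    simp [Matrix.mul_apply, Matrix.transpose_apply, sq]
  have hCS : (∑ j, (Fᵀ * F) j j) ^ 2 ≤ (d : ℝ) * ∑ j, ((Fᵀ * F) j j)^2 := by
    have := Finset.sum_mul_sq_le_sq_mul_sq (Finset.univ : Finset (Fin d))
      (fun _ => (1:ℝ)) (fun j => (Fᵀ * F) j j)
    simpa [Finset.card_univ] using this
  have hdiag : ∑ j, ((Fᵀ * F) j j)^2 ≤ frob (Fᵀ * F)^2 := by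
    rw [frob_sq]
    apply Finset.sum_le_sum; intro j _
    exact Finset.single_le_sum (f := fun i => ((Fᵀ*F) j i)^2)
      (fun i _ => sq_nonneg _) (Finset.mem_univ j)

  have h4 : frob F ^ 4 = (frob F ^2)^2 := by ring
  rw [h4, htr]
  calc (∑ j, (Fᵀ * F) j j)^2 ≤ (d:ℝ) * ∑ j, ((Fᵀ * F) j j)^2 := hCS
    _ ≤ (d : ℝ) * frob (Fᵀ * F)^2 := by
        apply mul_le_mul_of_nonneg_left hdiag (Nat.cast_nonneg d)

/-- B : B(BᵀB) = |BᵀB|² -/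
lemma mdot_cube (B : Matrix (Fin d) (Fin d) ℝ) :
    mdot B (B * (Bᵀ * B)) = frob (Bᵀ * B) ^ 2 := by
  rw [frob_sq]
  unfold mdot
  simp_rw [Matrix.mul_apply, Matrix.transpose_apply]
  -- LHS = ∑ i ∑ j B i j * ∑ k B i k * (BᵀB) k j
  -- RHS = ∑ k ∑ j (∑ i B i k * B i j)^2
  calc ∑ i, ∑ j, B i j * ∑ k, B i k * ∑ l, B l k * B l j
      = ∑ k, ∑ j, (∑ i, B i k * B i j) * (∑ l, B l k * B l j) := by
        simp_rw [Finset.mul_sum, Finset.sum_mul]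
        rw [Finset.sum_comm]
        apply Finset.sum_congr rfl; intro k _
        rw [Finset.sum_comm]
        apply Finset.sum_congr rfl; intro j _
        apply Finset.sum_congr rfl; intro i _
        apply Finset.sum_congr rfl; intro l _
        ring
    _ = ∑ k, ∑ j, (∑ i, B i k * B i j)^2 := by
        apply Finset.sum_congr rfl; intro k _
        apply Finset.sum_congr rfl; intro j _
        rw [sq]

lemma svkP_eq (G L : ℝ) (F : Matrix (Fin d) (Fin d) ℝ) :
    svkP G L F = G • (F * (Fᵀ * F)) + ((L / 2) * frob F ^ 2) • F
      - (G + L * d / 2) • F := by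
  unfold svkP
  rw [Matrix.mul_sub, Matrix.mul_add]
  rw [Matrix.mul_smul, Matrix.mul_smul, Matrix.mul_smul, Matrix.mul_one]

lemma frob_svkP_le (G L : ℝ) (hG : 0 < G) (F : Matrix (Fin d) (Fin d) ℝ) :
    frob (svkP G L F) ≤ (G + |L|/2) * frob F ^ 3 + |G + L * d / 2| * frob F := by
  rw [svkP_eq]
  have h1 : frob (G • (F * (Fᵀ * F)) + ((L / 2) * frob F ^ 2) • F
      - (G + L * d / 2) • F) ≤ frob (G • (F * (Fᵀ * F)))
      + frob (((L / 2) * frob F ^ 2) • F) + frob ((G + L * d / 2) • F) := by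
    rw [sub_eq_add_neg]
    calc _ ≤ frob (G • (F * (Fᵀ * F)) + ((L / 2) * frob F ^ 2) • F)
            + frob (-((G + L * d / 2) • F)) := frob_add_le _ _
      _ ≤ _ := by
          rw [← smul_neg, frob_smul]
          have h := frob_add_le (G • (F * (Fᵀ * F))) (((L / 2) * frob F ^ 2) • F)
          have : frob (-F) = frob F := by
            have := frob_smul (-1 : ℝ) F; simpa using this
          rw [this, ← frob_smul]
          linarith
  refine h1.trans ?_
  rw [frob_smul, frob_smul, frob_smul]
  have hF := frob_nonneg F
  have h2 : frob (F * (Fᵀ * F)) ≤ frob F ^ 3 := by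
    calc frob (F * (Fᵀ * F)) ≤ frob F * frob (Fᵀ * F) := frob_mul_le _ _
      _ ≤ frob F * (frob Fᵀ * frob F) := by
          apply mul_le_mul_of_nonneg_left (frob_mul_le _ _) hF
      _ = frob F ^3 := by rw [frob_transpose]; ring
  have h3 : |G| = G := abs_of_pos hG
  have h4 : |(L/2) * frob F ^2| ≤ (|L|/2) * frob F^2 := by
    rw [abs_mul]
    have : |frob F ^2| = frob F ^2 := abs_of_nonneg (by positivity)
    rw [this, abs_div]
    simp [abs_of_nonneg]
  rw [h3]
  nlinarith [abs_nonneg (G + L*d/2), sq_nonneg (frob F), mul_le_mul_of_nonneg_left h2 hG.le,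
    mul_le_mul_of_nonneg_right h4 hF]

lemma transpose_smul_mul (t : ℝ) (B : Matrix (Fin d) (Fin d) ℝ) :
    (t • B)ᵀ * (t • B) = (t * t) • (Bᵀ * B) := by
  rw [Matrix.transpose_smul, Matrix.smul_mul, Matrix.mul_smul, smul_smul]

lemma frob_smul_sq (t : ℝ) (B : Matrix (Fin d) (Fin d) ℝ) :
    frob (t • B) ^ 2 = t^2 * frob B ^ 2 := by
  rw [frob_smul]; rw [mul_pow, sq_abs]

/-- mdot B (svkP G L (t • B)) explicitly. -/
lemma mdot_svkP_smul (G L t : ℝ) (B : Matrix (Fin d) (Fin d) ℝ) :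
    mdot B (svkP G L (t • B)) = G * t^3 * frob (Bᵀ * B)^2
      + (L/2) * t^3 * frob B ^4 - (G + L*d/2) * t * frob B ^2 := by
  rw [svkP_eq]
  rw [mdot_sub_right, mdot_add_right]
  rw [transpose_smul_mul]
  rw [Matrix.smul_mul, Matrix.mul_smul, smul_smul]
  simp only [mdot_smul_right, mdot_cube, mdot_self, frob_smul_sq]
  ring

lemma eucl_inner (a y : EuclideanSpace ℝ (Fin d)) :
    (∑ i, a i * y i) = inner ℝ a y := by
  rw [PiLp.inner_apply]
  apply Finset.sum_congr rfl; intro i _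
  simp [RCLike.inner_apply, mul_comm]

lemma eucl_sum_le (a y : EuclideanSpace ℝ (Fin d)) : (∑ i, a i * y i) ≤ ‖a‖ * ‖y‖ := by
  rw [eucl_inner]; exact real_inner_le_norm a y

lemma eucl_self (a : EuclideanSpace ℝ (Fin d)) : (∑ i, a i * a i) = ‖a‖^2 := by
  rw [eucl_inner]; exact real_inner_self_eq_norm_sq a

lemma eucl_smul_sum (σ : ℝ) (a : EuclideanSpace ℝ (Fin d)) :
    (∑ i, a i * (σ • a) i) = σ * ‖a‖^2 := by
  have : ∀ i, a i * (σ • a) i = σ * (a i * a i) := by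
    intro i; simp [PiLp.smul_apply]; ring
  simp_rw [this, ← Finset.mul_sum, eucl_self]

lemma young_cube (x y ρ : ℝ) (hx : 0 ≤ x) (hy : 0 ≤ y) (hρ : 0 < ρ) :
    x * y^3 ≤ (3*ρ^4/4) * y^4 + x^4/(4*ρ^12) := by
  have base : ∀ p q : ℝ, 0 ≤ p → 0 ≤ q → p * q^3 ≤ (p^4 + 3*q^4)/4 := by
    intro p q hp hq
    have hq2 : (0:ℝ) ≤ p^2 + 2*p*q + 3*q^2 := by nlinarith [sq_nonneg (p+q), sq_nonneg q]
    nlinarith [mul_nonneg (sq_nonneg (p-q)) hq2]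
  have h := base (x/ρ^3) (ρ*y) (by positivity) (by positivity)
  have hρ3 : (0:ℝ) < ρ^3 := by positivity
  have e1 : (x/ρ^3) * (ρ*y)^3 = x * y^3 := by field_simp
  rw [e1] at h
  calc x * y^3 ≤ ((x/ρ^3)^4 + 3*(ρ*y)^4)/4 := h
    _ = (3*ρ^4/4) * y^4 + x^4/(4*ρ^12) := by field_simp; ring

lemma young_sq (x y ε : ℝ) (hε : 0 < ε) : x * y^2 ≤ ε * y^4 + x^2/(4*ε) := by
  have h2 : ε*(x*y^2) ≤ ε^2*y^4 + x^2/4 := by nlinarith [sq_nonneg (ε*y^2 - x/2)]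
  calc x*y^2 = (ε*(x*y^2))/ε := by field_simp
    _ ≤ (ε^2*y^4 + x^2/4)/ε := by gcongr
    _ = ε*y^4 + x^2/(4*ε) := by field_simp

lemma sq_le_quad (x : ℝ) : x^2 ≤ x^4/4 + 1 := by nlinarith [sq_nonneg (x^2 - 2)]

lemma poly_bound (β γ m X : ℝ) (hβ : 0 ≤ β) (hγ : 0 ≤ γ) (hm : 0 < m) (hX : 0 ≤ X) :
    β*X + γ*X^3 - m*X^4 ≤ β*(2*β/m + 2*γ/m + 1) + γ*(2*β/m + 2*γ/m + 1)^3 := by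
  set R := 2*β/m + 2*γ/m + 1 with hR
  have hR1 : 1 ≤ R := by
    have : 0 ≤ 2*β/m := by positivity
    have : 0 ≤ 2*γ/m := by positivity
    simp only [hR]; linarith
  have hR0 : 0 ≤ R := by linarith
  rcases le_total X R with hc | hc
  · have h1 : β*X ≤ β*R := mul_le_mul_of_nonneg_left hc hβ
    have h2 : γ*X^3 ≤ γ*R^3 := by
      apply mul_le_mul_of_nonneg_left _ hγ
      exact pow_le_pow_left₀ hX hc 3
    nlinarith [mul_nonneg hm.le (pow_nonneg hX 4)]
  · -- X ≥ R ≥ 1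
    have hX1 : 1 ≤ X := le_trans hR1 hc
    have hmR : m * R = 2*β + 2*γ + m := by
      rw [hR]; field_simp
    have key : m * X^4 ≥ (2*β + 2*γ) * X^3 := by
      have h1 : m * X^4 = (m*X) * X^3 := by ring
      have h2 : m * X ≥ m * R := mul_le_mul_of_nonneg_left hc hm.le
      have h3 : m * R ≥ 2*β + 2*γ := by rw [hmR]; linarith
      rw [h1]
      have : (m*X) * X^3 ≥ (2*β+2*γ) * X^3 := by
        apply mul_le_mul_of_nonneg_right _ (by positivity)
        linarith
      linarith
    have hX3 : X ≤ X^3 := by nlinarith [sq_nonneg X]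
    have hb : β * X ≤ β * X^3 := mul_le_mul_of_nonneg_left hX3 hβ
    nlinarith [mul_nonneg hβ hR0, mul_nonneg hγ (by positivity : (0:ℝ) ≤ R^3),
      mul_nonneg hγ (by positivity : (0:ℝ) ≤ X^3)]

lemma rpow_third (x : ℝ) (hx : 0 ≤ x) :
    (x ^ ((1:ℝ)/3)) ^ 3 = x ∧ (x ^ ((1:ℝ)/3)) ^ 4 = x ^ ((4:ℝ)/3) := by
  constructor
  · rw [← Real.rpow_natCast (x ^ ((1:ℝ)/3)) 3, ← Real.rpow_mul hx]
    norm_num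
  · rw [← Real.rpow_natCast (x ^ ((1:ℝ)/3)) 4, ← Real.rpow_mul hx]
    norm_num

lemma frob_zero {d : ℕ} : frob (0 : Matrix (Fin d) (Fin d) ℝ) = 0 := by
  simp [frob]

lemma svkP_zero (G L : ℝ) {d : ℕ} : svkP G L (0 : Matrix (Fin d) (Fin d) ℝ) = 0 := by
  unfold svkP
  exact Matrix.zero_mul _

lemma mdot_zero_right {d : ℕ} (B : Matrix (Fin d) (Fin d) ℝ) : mdot B 0 = 0 := by
  simp [mdot]

end Helpers

set_option maxHeartbeats 2000000 in
theorem svk_dual_integrand_lower_bound (d : ℕ) (G L : ℝ)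
    (hG : 0 < G) (hGL : 0 < G + d * L / 2) :
    ∃ c : ℝ, 0 < c ∧
      ∀ (A B : Matrix (Fin d) (Fin d) ℝ) (a : EuclideanSpace ℝ (Fin d)),
        c * (‖a‖ ^ ((4:ℝ)/3) + frob A ^ ((4:ℝ)/3) + frob B ^ 4) - 1 / c
          ≤ sSup (svkSet G L A a B) := by
  rcases Nat.eq_zero_or_pos d with hd0 | hdpos
  · -- degenerate case d = 0
    subst hd0
    refine ⟨1, one_pos, fun A B a => ?_⟩
    have ha : a = 0 := Subsingleton.elim a 0
    have hA : frob A = 0 := by simp [frob]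
    have hB : frob B = 0 := by simp [frob]
    have hset : svkSet G L A a B = {0} := by
      ext z
      simp only [svkSet, Set.mem_setOf_eq, Set.mem_singleton_iff]
      constructor
      · rintro ⟨F, y, rfl⟩
        have hy : y = 0 := Subsingleton.elim y 0
        have hq : frob (Fᵀ * F) = 0 := by simp [frob]
        have h1 : mdot A F = 0 := by simp [mdot]
        have h2 : mdot B (svkP G L F) = 0 := by simp [mdot]
        have h3 : (∑ i, a i * y i) = 0 := by simp
        have h4 : svkH G L y F = 0 := by
          simp only [svkH]; rw [hq, hy, norm_zero]; ring
        rw [h1, h2, h3, h4]; ring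
      · intro hz
        refine ⟨0, 0, ?_⟩
        have hq : frob ((0:Matrix (Fin 0) (Fin 0) ℝ)ᵀ * 0) = 0 := by simp [frob]
        have h1 : mdot A 0 = 0 := by simp [mdot]
        have h2 : mdot B (svkP G L 0) = 0 := by simp [mdot]
        have h3 : (∑ i, a i * (0:EuclideanSpace ℝ (Fin 0)) i) = 0 := by simp
        have h4 : svkH G L 0 (0:Matrix (Fin 0) (Fin 0) ℝ) = 0 := by
          simp only [svkH]; rw [hq, norm_zero]; ring
        rw [h1, h2, h3, h4, hz]; ring
    rw [hset, csSup_singleton]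
    rw [ha, hA, hB]
    simp [Real.zero_rpow (by norm_num : (4:ℝ)/3 ≠ 0)]
  · -- main case d ≥ 1
    have hd1 : (1:ℝ) ≤ (d:ℝ) := by exact_mod_cast hdpos
    have hdR : (0:ℝ) < (d:ℝ) := by linarith
    set μ := G + L/2 with hμdef
    set κ := G + L*(d:ℝ)/2 with hκdef
    have hκ : 0 < κ := by rw [hκdef]; linarith only [hGL]
    have hμ : 0 < μ := by
      rcases le_or_gt 0 L with hL | hL
      · rw [hμdef]; linarith
      · have h1 : (d:ℝ)*L ≤ 1*L := mul_le_mul_of_nonpos_right hd1 hL.le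
        rw [hκdef] at hκ
        rw [hμdef]; linarith only [hκ, h1]
    set D₁ := G + |L|/2 with hD₁def
    set D₂ := |G + L*(d:ℝ)/2| with hD₂def
    have hD₁ : 0 < D₁ := by rw [hD₁def]; positivity
    have hD₂ : 0 ≤ D₂ := abs_nonneg _
    set t₀ := min (min κ (2*G) / μ) (κ/(2*(d:ℝ))) with ht₀def
    have ht₀ : 0 < t₀ :=
      lt_min (div_pos (lt_min hκ (by linarith)) hμ)
        (div_pos hκ (by linarith))
    have ht₀a : μ * t₀ ≤ κ := by
      have h1 : t₀ ≤ min κ (2*G) / μ := min_le_left _ _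
      have h2 := (le_div_iff₀ hμ).mp h1
      calc μ * t₀ = t₀ * μ := by ring
        _ ≤ min κ (2*G) := h2
        _ ≤ κ := min_le_left _ _
    have ht₀b : μ * t₀ ≤ 2*G := by
      have h1 : t₀ ≤ min κ (2*G) / μ := min_le_left _ _
      have h2 := (le_div_iff₀ hμ).mp h1
      calc μ * t₀ = t₀ * μ := by ring
        _ ≤ min κ (2*G) := h2
        _ ≤ 2*G := min_le_right _ _
    have ht₀c : t₀ ≤ κ/(2*(d:ℝ)) := min_le_right _ _
    clear_value μ κ D₁ D₂ t₀
    set cB := κ * t₀^3/(4*(d:ℝ)) with hcBdef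
    have hcB : 0 < cB := by
      rw [hcBdef]
      exact div_pos (mul_pos hκ (pow_pos ht₀ 3)) (by linarith)
    clear_value cB
    set θ := min (min 1 (1/(2*μ))) (cB/(8192*D₁^4 + 1)) with hθdef
    have hD₁4 : (0:ℝ) < 8192*D₁^4 + 1 := by positivity
    have hθ : 0 < θ :=
      lt_min (lt_min one_pos (one_div_pos.mpr (by linarith))) (div_pos hcB hD₁4)
    have hθ1 : θ ≤ 1 := le_trans (min_le_left _ _) (min_le_left _ _)
    have hθμ : μ * θ ≤ 1/2 := by
      have h1 : θ ≤ 1/(2*μ) := le_trans (min_le_left _ _) (min_le_right _ _)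
      have h2 := mul_le_mul_of_nonneg_left h1 hμ.le
      calc μ * θ ≤ μ * (1/(2*μ)) := h2
        _ = 1/2 := by field_simp
    have hθB : (8192*D₁^4 + 1)*θ ≤ cB := by
      have h1 : θ ≤ cB/(8192*D₁^4 + 1) := min_le_right _ _
      calc (8192*D₁^4 + 1)*θ ≤ (8192*D₁^4 + 1)*(cB/(8192*D₁^4 + 1)) :=
            mul_le_mul_of_nonneg_left h1 hD₁4.le
        _ = cB := by field_simp
    clear_value θ
    set N := 2/θ^4 with hNdef
    have hN : 0 < N := by
      rw [hNdef]; exact div_pos (by norm_num) (pow_pos hθ 4)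
    set K_A := θ^4/2 + D₂^4*θ^4/cB with hKAdef
    have hKA : 0 ≤ K_A := by
      rw [hKAdef]
      have : (0:ℝ) ≤ D₂^4*θ^4/cB := div_nonneg (by positivity) hcB.le
      have h0 : (0:ℝ) ≤ θ^4/2 := by positivity
      linarith
    set E := 1024*D₁^4*θ^36 + cB*θ^4/16 with hEdef
    set K_B := κ^2*t₀^2/(2*cB) with hKBdef
    have hKB : 0 ≤ K_B := by
      rw [hKBdef]; exact div_nonneg (by positivity) (by linarith)
    clear_value N K_A E K_B
    set K₁ := N*K_A + K_B with hK₁def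
    have hK₁ : 0 ≤ K₁ := by
      rw [hK₁def]; have := mul_nonneg hN.le hKA; linarith
    clear_value K₁
    set K₂ := K₁/(N+2) with hK₂def
    have hK₂ : 0 ≤ K₂ := by
      rw [hK₂def]; exact div_nonneg hK₁ (by linarith)
    set c₁ := min (1/4) (cB/2) / (N+2) with hc₁def
    have hc₁ : 0 < c₁ := by
      rw [hc₁def]
      exact div_pos (lt_min (by norm_num) (by linarith)) (by linarith)
    clear_value K₂ c₁
    refine ⟨min c₁ (1/(K₂+1)), lt_min hc₁ (one_div_pos.mpr (by linarith)), fun A B a => ?_⟩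
    set c := min c₁ (1/(K₂+1)) with hcdef
    have hc : 0 < c := lt_min hc₁ (one_div_pos.mpr (by linarith))
    clear_value c
    set fA := frob A with hfAdef
    set fB := frob B with hfBdef
    have hfA : 0 ≤ fA := frob_nonneg A
    have hfB : 0 ≤ fB := frob_nonneg B
    set u := fA ^ ((1:ℝ)/3) with hudef
    set w := ‖a‖ ^ ((1:ℝ)/3) with hwdef
    have hu0 : 0 ≤ u := Real.rpow_nonneg hfA _
    have hw0 : 0 ≤ w := Real.rpow_nonneg (norm_nonneg a) _
    have hu3 : u^3 = fA := by rw [hudef]; exact (rpow_third fA hfA).1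
    have hu4 : u^4 = fA ^ ((4:ℝ)/3) := by rw [hudef]; exact (rpow_third fA hfA).2
    have hw3 : w^3 = ‖a‖ := by rw [hwdef]; exact (rpow_third ‖a‖ (norm_nonneg a)).1
    have hw4 : w^4 = ‖a‖ ^ ((4:ℝ)/3) := by
      rw [hwdef]; exact (rpow_third ‖a‖ (norm_nonneg a)).2
    set S := sSup (svkSet G L A a B) with hSdef
    -- BddAbove
    set m := μ/(2*(d:ℝ)) with hmdef
    have hm : 0 < m := by rw [hmdef]; exact div_pos hμ (by linarith)
    set β := fA + fB*D₂ with hβdef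
    have hβ0 : 0 ≤ β := by
      rw [hβdef]; have := mul_nonneg hfB hD₂; linarith
    set γ := fB*D₁ with hγdef
    have hγ0 : 0 ≤ γ := by rw [hγdef]; exact mul_nonneg hfB hD₁.le
    clear_value m β γ
    set Mb := ‖a‖*(2*‖a‖/(1/4) + 2*0/(1/4) + 1) + 0*(2*‖a‖/(1/4) + 2*0/(1/4) + 1)^3
      + (β*(2*β/m + 2*γ/m + 1) + γ*(2*β/m + 2*γ/m + 1)^3) with hMbdef
    have hbdd : BddAbove (svkSet G L A a B) := by
      refine ⟨Mb, ?_⟩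
      rintro z ⟨F, y, rfl⟩
      have h_a : (∑ i, a i * y i) ≤ ‖a‖ * ‖y‖ := eucl_sum_le a y
      have h_A : mdot A F ≤ fA * frob F := mdot_le A F
      have h_B : mdot B (svkP G L F) ≤ fB * (D₁ * frob F ^3 + D₂ * frob F) := by
        calc mdot B (svkP G L F) ≤ fB * frob (svkP G L F) := mdot_le B _
          _ ≤ fB * (D₁ * frob F ^3 + D₂ * frob F) := by
              apply mul_le_mul_of_nonneg_left _ hfB
              have h0 := frob_svkP_le G L hG F
              rw [hD₁def, hD₂def]; linarith
      have h_q : m * frob F ^4 ≤ (μ/2) * frob (Fᵀ*F)^2 := by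
        have h1 := frob_quad_le F
        have h2 := mul_le_mul_of_nonneg_left h1 hm.le
        calc m * frob F ^4 ≤ m * ((d:ℝ) * frob (Fᵀ*F)^2) := h2
          _ = (μ/2) * frob (Fᵀ*F)^2 := by rw [hmdef]; field_simp
      have hp1 := poly_bound ‖a‖ 0 (1/4) ‖y‖ (norm_nonneg a) le_rfl (by norm_num)
        (norm_nonneg y)
      have hp2 := poly_bound β γ m (frob F) hβ0 hγ0 hm (frob_nonneg F)
      have hexp : fA * frob F + fB * (D₁ * frob F ^3 + D₂ * frob F)
          = β * frob F + γ * frob F ^3 := by rw [hβdef, hγdef]; ring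
      simp only [svkH]
      rw [← hμdef, hMbdef]
      linarith only [h_a, h_A, h_B, h_q, hp1, hp2, hexp]
    have hmem : ∀ (F : Matrix (Fin d) (Fin d) ℝ) (y : EuclideanSpace ℝ (Fin d)),
        (∑ i, a i * y i) + mdot A F + mdot B (svkP G L F) - svkH G L y F ≤ S :=
      fun F y => le_csSup hbdd ⟨F, y, rfl⟩
    -- (I0)
    have hI0 : (0:ℝ) ≤ S := by
      have h := hmem 0 (0 : EuclideanSpace ℝ (Fin d))
      have e : (∑ i, a i * (0:EuclideanSpace ℝ (Fin d)) i) + mdot A 0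
          + mdot B (svkP G L 0) - svkH G L (0 : EuclideanSpace ℝ (Fin d)) (0 : Matrix (Fin d) (Fin d) ℝ) = 0 := by
        rw [svkP_zero, mdot_zero_right, mdot_zero_right]
        simp only [svkH]
        have h0 : frob ((0:Matrix (Fin d) (Fin d) ℝ)ᵀ * 0) = 0 := by
          rw [Matrix.transpose_zero, Matrix.mul_zero, frob_zero]
        rw [h0]
        simp
      rw [e] at h; exact h
    -- (Ia)
    have hIa : (3/4)*w^4 ≤ S := by
      by_cases ha : a = 0
      · have hw' : w = 0 := by
          rw [hwdef, ha, norm_zero, Real.zero_rpow (by norm_num : (1:ℝ)/3 ≠ 0)]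
        rw [hw']; simpa using hI0
      · have hna : 0 < ‖a‖ := norm_pos_iff.mpr ha
        have hwpos : 0 < w := by rw [hwdef]; exact Real.rpow_pos_of_pos hna _
        have h := hmem 0 (((1:ℝ)/w^2) • a)
        have e : (∑ i, a i * (((1:ℝ)/w^2) • a) i) + mdot A 0
            + mdot B (svkP G L 0) - svkH G L (((1:ℝ)/w^2) • a) 0 = (3/4)*w^4 := by
          rw [svkP_zero, mdot_zero_right, mdot_zero_right, eucl_smul_sum]
          simp only [svkH]
          have hq : frob ((0:Matrix (Fin d) (Fin d) ℝ)ᵀ * 0) = 0 := by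
            rw [Matrix.transpose_zero, Matrix.mul_zero, frob_zero]
          rw [hq, norm_smul]
          have h0 : ‖(1:ℝ)/w^2‖ = 1/w^2 := by
            rw [Real.norm_eq_abs, abs_of_pos (by positivity)]
          rw [h0, ← hw3]
          field_simp
          ring
        rw [e] at h; exact h
    -- (IA)
    have hIA : (θ^4/2)*u^4 - E*fB^4 - K_A ≤ S := by
      by_cases hfA0 : fA = 0
      · have hu' : u = 0 := by
          rw [hudef, hfA0, Real.zero_rpow (by norm_num : (1:ℝ)/3 ≠ 0)]
        rw [hu']
        have h1 : 0 ≤ E*fB^4 := by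
          rw [hEdef]
          have h2a : (0:ℝ) ≤ 1024*D₁^4*θ^36 := by positivity
          have h2b : (0:ℝ) ≤ cB*θ^4/16 :=
            div_nonneg (mul_nonneg hcB.le (pow_nonneg hθ.le 4)) (by norm_num)
          exact mul_nonneg (by linarith) (pow_nonneg hfB 4)
        linarith only [hI0, hKA, h1]
      · have hfApos : 0 < fA := lt_of_le_of_ne hfA (Ne.symm hfA0)
        have hupos : 0 < u := by rw [hudef]; exact Real.rpow_pos_of_pos hfApos _
        set s := θ^4/u^2 with hsdef
        have hs : 0 < s := by
          rw [hsdef]; exact div_pos (pow_pos hθ 4) (pow_pos hupos 2)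
        have e1 : mdot A (s • A) = s * fA^2 := by
          rw [mdot_smul_right, mdot_self, ← hfAdef]
        have e2 : frob (s • A) = s * fA := by
          rw [frob_smul, abs_of_pos hs, ← hfAdef]
        have e3 : -(fB * (D₁ * (s*fA)^3 + D₂ * (s*fA))) ≤ mdot B (svkP G L (s • A)) := by
          have h1 := mdot_neg_le B (svkP G L (s • A))
          have h2 : frob (svkP G L (s • A)) ≤ D₁ * (s*fA)^3 + D₂ * (s*fA) := by
            have h3 := frob_svkP_le G L hG (s • A)
            rw [e2] at h3
            rw [hD₁def, hD₂def]; linarith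
          have h3 : fB * frob (svkP G L (s • A)) ≤ fB * (D₁ * (s*fA)^3 + D₂ * (s*fA)) :=
            mul_le_mul_of_nonneg_left h2 hfB
          rw [← hfBdef] at h1
          linarith
        have e4 : svkH G L 0 (s • A) ≤ (μ/2) * (s^2*fA^2)^2 := by
          simp only [svkH]
          rw [norm_zero, ← hμdef]
          have h1 : frob ((s•A)ᵀ * (s•A)) = s^2 * frob (Aᵀ*A) := by
            rw [transpose_smul_mul, frob_smul, abs_of_pos (mul_pos hs hs)]
            ring
          have h2 : frob (Aᵀ*A) ≤ fA^2 := by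
            calc frob (Aᵀ*A) ≤ frob Aᵀ * frob A := frob_mul_le _ _
              _ = fA^2 := by rw [frob_transpose, ← hfAdef]; ring
          have h3 : frob ((s•A)ᵀ * (s•A))^2 ≤ (s^2*fA^2)^2 := by
            rw [h1, mul_pow]
            have h4 : frob (Aᵀ*A)^2 ≤ (fA^2)^2 :=
              pow_le_pow_left₀ (frob_nonneg _) h2 2
            have h5 : (0:ℝ) ≤ (s^2)^2 := by positivity
            calc (s^2)^2 * frob (Aᵀ*A)^2 ≤ (s^2)^2 * (fA^2)^2 :=
                  mul_le_mul_of_nonneg_left h4 h5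
              _ = (s^2*fA^2)^2 := by ring
          have h4 : (0:ℝ) ≤ μ/2 := by linarith only [hμ]
          linarith only [mul_le_mul_of_nonneg_left h3 h4]
        have efA : fA = u^3 := hu3.symm
        have i1 : s * fA^2 = θ^4 * u^4 := by
          rw [hsdef, efA]; field_simp
        have i2 : s * fA = θ^4 * u := by
          rw [hsdef, efA]; field_simp
        have i3 : (s*fA)^3 = θ^12 * u^3 := by rw [i2]; ring
        have i4 : (s^2*fA^2)^2 = θ^16 * u^4 := by
          rw [hsdef, efA]; field_simp
        have hraw : θ^4*u^4 - fB*(D₁*(θ^12*u^3) + D₂*(θ^4*u))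
            - (μ/2)*(θ^16*u^4) ≤ S := by
          have h := hmem (s • A) 0
          have e0 : (∑ i, a i * (0:EuclideanSpace ℝ (Fin d)) i) = 0 := by simp
          rw [e0, e1, i1] at h
          rw [i3, i2] at e3
          rw [i4] at e4
          linarith only [h, e3, e4]
        have hY1 : D₁*θ^12*fB * u^3 ≤ (3*θ^4/64)*u^4 + 1024*D₁^4*θ^36*fB^4 := by
          have hx0 : (0:ℝ) ≤ D₁*θ^12*fB :=
            mul_nonneg (mul_nonneg hD₁.le (pow_nonneg hθ.le 12)) hfB
          have h1 := young_cube (D₁*θ^12*fB) u (θ/2) hx0 hu0 (by linarith)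
          have e5 : (3*(θ/2)^4/4) = 3*θ^4/64 := by ring
          have e6 : (D₁*θ^12*fB)^4/(4*(θ/2)^12) = 1024*D₁^4*θ^36*fB^4 := by
            field_simp [hθ.ne']
            ring
          rw [e5, e6] at h1
          exact h1
        have hY2 : D₂*θ^4*fB*u ≤ (θ^4/8)*u^4 + θ^4/2 + (cB*θ^4/16)*fB^4 + D₂^4*θ^4/cB := by
          have h1 : D₂*θ^4*fB*u ≤ (θ^4/2)*u^2 + (D₂^2*θ^4/2)*fB^2 := by
            linarith only [sq_nonneg (θ^2*u - D₂*θ^2*fB)]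
          have h2 : (θ^4/2)*u^2 ≤ (θ^4/8)*u^4 + θ^4/2 := by
            linarith only [mul_le_mul_of_nonneg_left (sq_le_quad u)
              (le_of_lt (pow_pos hθ 4))]
          have hε : (0:ℝ) < cB*θ^4/16 := by
            have := mul_pos hcB (pow_pos hθ 4); linarith
          have h4 := young_sq (D₂^2*θ^4/2) fB (cB*θ^4/16) hε
          have e7 : (D₂^2*θ^4/2)^2/(4*(cB*θ^4/16)) = D₂^4*θ^4/cB := by
            field_simp [hθ.ne', hcB.ne']
            ring
          rw [e7] at h4
          linarith only [h1, h2, h4]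
        have hμ16 : (μ/2)*(θ^16*u^4) ≤ (θ^4/4)*u^4 := by
          have h2 : θ^12 ≤ θ := by
            calc θ^12 ≤ θ^1 := pow_le_pow_of_le_one hθ.le hθ1 (by norm_num)
              _ = θ := pow_one θ
          have h1 : μ*θ^12 ≤ 1/2 := by
            have h3 : μ*θ^12 ≤ μ*θ := mul_le_mul_of_nonneg_left h2 hμ.le
            linarith
          linarith only [mul_le_mul_of_nonneg_right h1
            (by positivity : (0:ℝ) ≤ θ^4*u^4/2)]
        rw [hEdef, hKAdef]
        linarith only [hraw, hY1, hY2, hμ16,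
          mul_nonneg (pow_nonneg hθ.le 4) (pow_nonneg hu0 4)]
    -- (IB)
    have hIB : cB*fB^4 - (3/4)*u^4 - K_B ≤ S := by
      have h := hmem (t₀ • B) 0
      set g := frob (Bᵀ*B) with hgdef
      have hg0 : 0 ≤ g := frob_nonneg _
      have e2 : mdot B (svkP G L (t₀ • B)) = G*t₀^3*g^2 + (L/2)*t₀^3*fB^4
          - κ*t₀*fB^2 := by
        rw [mdot_svkP_smul, ← hgdef, ← hfBdef, ← hκdef]
      have e3 : svkH G L 0 (t₀ • B) = (μ/2)*(t₀^4*g^2) := by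
        simp only [svkH]
        rw [norm_zero, ← hμdef]
        have h1 : frob ((t₀•B)ᵀ * (t₀•B)) = t₀^2 * g := by
          rw [transpose_smul_mul, frob_smul, abs_of_pos (mul_pos ht₀ ht₀), ← hgdef]
          ring
        rw [h1]
        ring
      have e1 : mdot A (t₀ • B) = t₀ * mdot A B := mdot_smul_right t₀ A B
      have e0 : (∑ i, a i * (0:EuclideanSpace ℝ (Fin d)) i) = 0 := by simp
      rw [e0, e1, e2, e3] at h
      have hgq : fB^4 ≤ (d:ℝ)*g^2 := by
        have h0 := frob_quad_le B
        rw [← hgdef, ← hfBdef] at h0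
        exact h0
      have hcoef : 0 ≤ G*t₀^3 - (μ/2)*t₀^4 := by
        have h0 : (0:ℝ) ≤ G - (μ/2)*t₀ := by linarith only [ht₀b]
        linarith only [mul_nonneg h0 (pow_nonneg ht₀.le 3)]
      have hmain : 2*cB*fB^4 ≤ G*t₀^3*g^2 + (L/2)*t₀^3*fB^4 - (μ/2)*(t₀^4*g^2) := by
        have h1 : (G*t₀^3 - (μ/2)*t₀^4) * (fB^4/(d:ℝ)) ≤ (G*t₀^3 - (μ/2)*t₀^4) * g^2 := by
          apply mul_le_mul_of_nonneg_left _ hcoef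
          rw [div_le_iff₀ hdR]
          linarith only [hgq]
        have key : 2*cB ≤ (G*t₀^3 - (μ/2)*t₀^4)/(d:ℝ) + (L/2)*t₀^3 := by
          rw [hcBdef]
          have e5 : 2*(κ*t₀^3/(4*(d:ℝ))) = (κ*t₀^3)/(2*(d:ℝ)) := by ring
          have e6 : (G*t₀^3 - (μ/2)*t₀^4)/(d:ℝ) + (L/2)*t₀^3
              = (G*t₀^3 - (μ/2)*t₀^4 + (L/2)*t₀^3*(d:ℝ))/(d:ℝ) := by
            field_simp
          rw [e5, e6, div_le_div_iff₀ (by linarith) hdR]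
          have hsub : κ*(t₀^3*(d:ℝ)) = (G + L*(d:ℝ)/2)*(t₀^3*(d:ℝ)) := by rw [hκdef]
          have hcore : μ*t₀*(t₀^3*(d:ℝ)) ≤ κ*(t₀^3*(d:ℝ)) :=
            mul_le_mul_of_nonneg_right ht₀a
              (mul_nonneg (pow_nonneg ht₀.le 3) hdR.le)
          linarith only [hsub, hcore]
        have h2 : 2*cB*fB^4 ≤ (G*t₀^3 - (μ/2)*t₀^4) * (fB^4/(d:ℝ)) + (L/2)*t₀^3*fB^4 := by
          have hk := mul_le_mul_of_nonneg_right key (pow_nonneg hfB 4)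
          have ee : ((G*t₀^3 - (μ/2)*t₀^4)/(d:ℝ) + (L/2)*t₀^3)*fB^4
              = (G*t₀^3 - (μ/2)*t₀^4) * (fB^4/(d:ℝ)) + (L/2)*t₀^3*fB^4 := by ring
          rw [ee] at hk
          linarith only [hk]
        linarith only [h1, h2]
      have hAB : -(t₀ * (fA*fB)) ≤ t₀ * mdot A B := by
        have h1 := mdot_neg_le A B
        rw [← hfAdef, ← hfBdef] at h1
        linarith only [mul_le_mul_of_nonneg_left h1 ht₀.le]
      have habs1 : κ*t₀*fB^2 ≤ (cB/2)*fB^4 + κ^2*t₀^2/(2*cB) := by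
        have h1 := young_sq (κ*t₀) fB (cB/2) (by linarith)
        have e5 : (κ*t₀)^2/(4*(cB/2)) = κ^2*t₀^2/(2*cB) := by
          field_simp [hcB.ne']
          ring
        rw [e5] at h1
        exact h1
      have habs2 : t₀*(fA*fB) ≤ (3/4)*u^4 + (t₀^4/4)*fB^4 := by
        have h1 := young_cube (t₀*fB) u 1 (mul_nonneg ht₀.le hfB) hu0 one_pos
        have e6 : (3*(1:ℝ)^4/4) = 3/4 := by norm_num
        have e7 : (t₀*fB)^4/(4*(1:ℝ)^12) = (t₀^4/4)*fB^4 := by ring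
        rw [e6, e7] at h1
        have e8 : t₀*(fA*fB) = (t₀*fB)*u^3 := by rw [← hu3]; ring
        rw [e8]
        exact h1
      have ht04 : (t₀^4/4)*fB^4 ≤ (cB/2)*fB^4 := by
        apply mul_le_mul_of_nonneg_right _ (pow_nonneg hfB 4)
        rw [hcBdef]
        have h0 : t₀ * t₀^3 ≤ (κ/(2*(d:ℝ)))*t₀^3 :=
          mul_le_mul_of_nonneg_right ht₀c (pow_nonneg ht₀.le 3)
        have e9 : (κ/(2*(d:ℝ)))*t₀^3 = κ*t₀^3/(2*(d:ℝ)) := by ring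
        rw [e9] at h0
        have e10 : κ*t₀^3/(4*(d:ℝ))/2 = κ*t₀^3/(2*(d:ℝ))/4 := by ring
        rw [e10]
        linarith only [h0]
      rw [hKBdef]
      linarith only [h, hmain, hAB, habs1, habs2, ht04]
    -- Combination
    have hNhalf : N*(θ^4/2) = 1 := by
      rw [hNdef]; field_simp
    have hNE : N*E = 2048*D₁^4*θ^32 + cB/8 := by
      rw [hNdef, hEdef]; field_simp [hθ.ne']; ring
    have hθ32 : 2048*D₁^4*θ^32 ≤ cB/4 := by
      have h1 : θ^32 ≤ θ := by
        calc θ^32 ≤ θ^1 := pow_le_pow_of_le_one hθ.le hθ1 (by norm_num)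
          _ = θ := pow_one θ
      have h2 : 2048*D₁^4*θ^32 ≤ 2048*D₁^4*θ := by
        have h0 := mul_le_mul_of_nonneg_left h1 (by positivity : (0:ℝ) ≤ 2048*D₁^4)
        linarith
      have h3 : 2048*D₁^4*θ ≤ cB/4 := by linarith only [hθB, hθ.le]
      linarith
    have hsum : (N+2)*S ≥ (3/4)*w^4 + (1/4)*u^4 + (cB/2)*fB^4 - K₁ := by
      have h1 : N*((θ^4/2)*u^4 - E*fB^4 - K_A) ≤ N*S :=
        mul_le_mul_of_nonneg_left hIA hN.le
      have h2 : N*((θ^4/2)*u^4 - E*fB^4 - K_A)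
          = (N*(θ^4/2))*u^4 - (N*E)*fB^4 - N*K_A := by ring
      rw [h2, hNhalf, hNE] at h1
      have h3 : (2048*D₁^4*θ^32 + cB/8)*fB^4 ≤ (cB/4 + cB/8)*fB^4 := by
        apply mul_le_mul_of_nonneg_right _ (pow_nonneg hfB 4)
        linarith
      rw [hK₁def]
      linarith only [hIa, hIB, h1, h3, mul_nonneg hcB.le (pow_nonneg hfB 4)]
    have hSfin : ((3/4)*w^4 + (1/4)*u^4 + (cB/2)*fB^4 - K₁)/(N+2) ≤ S := by
      rw [div_le_iff₀ (by linarith only [hN] : (0:ℝ) < N+2)]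
      linarith only [hsum]
    -- final arithmetic
    rw [← hw4, ← hu4]
    have hcc₁ : c ≤ c₁ := by rw [hcdef]; exact min_le_left _ _
    have hcK : K₂ + 1 ≤ 1/c := by
      have h1 : c ≤ 1/(K₂+1) := by rw [hcdef]; exact min_le_right _ _
      have h2 : (0:ℝ) < K₂ + 1 := by linarith
      calc K₂ + 1 = 1/(1/(K₂+1)) := (one_div_one_div _).symm
        _ ≤ 1/c := one_div_le_one_div_of_le hc h1
    have hpos_sum : (0:ℝ) ≤ w^4 + u^4 + fB^4 := by positivity
    have h5 : c*(w^4+u^4+fB^4) ≤ c₁*(w^4+u^4+fB^4) :=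
      mul_le_mul_of_nonneg_right hcc₁ hpos_sum
    have hm1 : min (1/4 : ℝ) (cB/2) ≤ 1/4 := min_le_left _ _
    have hm2 : min (1/4 : ℝ) (cB/2) ≤ cB/2 := min_le_right _ _
    have hnum : min (1/4 : ℝ) (cB/2) * (w^4+u^4+fB^4)
        ≤ (3/4)*w^4+(1/4)*u^4+(cB/2)*fB^4 := by
      have hn1 : min (1/4 : ℝ) (cB/2) * w^4 ≤ (1/4)*w^4 :=
        mul_le_mul_of_nonneg_right hm1 (pow_nonneg hw0 4)
      have hn2 : min (1/4 : ℝ) (cB/2) * u^4 ≤ (1/4)*u^4 :=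
        mul_le_mul_of_nonneg_right hm1 (pow_nonneg hu0 4)
      have hn3 : min (1/4 : ℝ) (cB/2) * fB^4 ≤ (cB/2)*fB^4 :=
        mul_le_mul_of_nonneg_right hm2 (pow_nonneg hfB 4)
      linarith only [hn1, hn2, hn3, pow_nonneg hw0 4]
    have h6 : c₁*(w^4+u^4+fB^4) ≤ ((3/4)*w^4+(1/4)*u^4+(cB/2)*fB^4)/(N+2) := by
      have e : c₁*(w^4+u^4+fB^4)
          = (min (1/4 : ℝ) (cB/2) * (w^4+u^4+fB^4))/(N+2) := by
        rw [hc₁def]; ring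
      rw [e]
      exact (div_le_div_iff_of_pos_right (by linarith only [hN] : (0:ℝ) < N+2)).mpr hnum
    have h7 : ((3/4)*w^4+(1/4)*u^4+(cB/2)*fB^4)/(N+2)
        = ((3/4)*w^4+(1/4)*u^4+(cB/2)*fB^4 - K₁)/(N+2) + K₂ := by
      rw [hK₂def]; ring
    linarith only [h5, h6, hSfin, hcK, h7.le, h7.ge]
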